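/- Let m be an odd natural number, V a complex vector space which is an internal direct sum V = ⊕_{k=0}^m V^k of subspaces, and ∇, Γ : V → V linear maps with ∇ ∘ ∇ = 0, Γ ∘ Γ = id, ∇(V^k) ⊆ V^{k+1} for all k (where V^j := {0} for j > m), and Γ(V^k) ⊆ V^{m−k} for all k. Set B := Γ ∘ ∇ + ∇ ∘ Γ. If B is bijective, then for every k the map ∇ ∘ Γ restricts to a linear bijection from V^k ∩ ker(Γ ∘ ∇) onto V^{m−k+1} ∩ ker(Γ ∘ ∇) (where V^{m+1} := {0}, so in particular V^0 ∩ ker(Γ ∘ ∇) = {0}). -/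

import Mathlib

/-- The isomorphism (stern2) in the proof of Lemma 4.8 of the paper: let `V` be a
complex vector space, graded as an internal direct sum `V = ⊕_{k=0}^m V^k`
(modeled by `W : ℤ → Submodule ℂ V` with `W j = 0` for `j < 0` or `j > m`), with
`m` odd, `∇` a differential of degree `+1`, `Γ` a chirality operator with
`Γ(V^k) ⊆ V^{m-k}`.  If the odd-signature operator `B = Γ∇ + ∇Γ` is bijective,
then for every `k` the map `∇ ∘ Γ` restricts to a linear bijection from
`V^k ∩ ker(Γ ∘ ∇)` onto `V^{m-k+1} ∩ ker(Γ ∘ ∇)` (in particular, since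
`V^{m+1} = 0`, the space `V^0 ∩ ker(Γ ∘ ∇)` is trivial). -/
theorem nablaGamma_restrict_bijective
    {V : Type*} [AddCommGroup V] [Module ℂ V]
    (m : ℕ) (hm : Odd m)
    (W : ℤ → Submodule ℂ V)
    (hbot : ∀ j : ℤ, (j < 0 ∨ (m : ℤ) < j) → W j = ⊥)
    (hinternal : DirectSum.IsInternal W)
    (N G : V →ₗ[ℂ] V)
    (hN : N ∘ₗ N = 0) (hG : G ∘ₗ G = LinearMap.id)
    (hNdeg : ∀ k : ℤ, Submodule.map N (W k) ≤ W (k + 1))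
    (hGdeg : ∀ k : ℤ, Submodule.map G (W k) ≤ W ((m : ℤ) - k))
    (hB : Function.Bijective (G ∘ₗ N + N ∘ₗ G)) :
    ∀ (k : ℤ)
      (hmap : ∀ x ∈ W k ⊓ LinearMap.ker (G ∘ₗ N),
        (N ∘ₗ G) x ∈ W ((m : ℤ) - k + 1) ⊓ LinearMap.ker (G ∘ₗ N)),
      Function.Bijective ((N ∘ₗ G).restrict hmap) := by
  classical
  letI : DirectSum.Decomposition W := hinternal.chooseDecomposition
  have hNN : ∀ x : V, N (N x) = 0 := fun x => LinearMap.ext_iff.mp hN x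
  have hGG : ∀ x : V, G (G x) = x := fun x => LinearMap.ext_iff.mp hG x
  set Bmap := G ∘ₗ N + N ∘ₗ G with hBdef
  have hBapp : ∀ v : V, Bmap v = G (N v) + N (G v) := by
    intro v; simp [hBdef]
  -- zero from B-injectivity
  have hBzero : ∀ v : V, G (N v) = 0 → N (G v) = 0 → v = 0 := by
    intro v h1 h2
    apply hB.injective
    rw [map_zero, hBapp, h1, h2, add_zero]
  -- graded components of maps of pure degree
  have key : ∀ (L : V →ₗ[ℂ] V) (f : ℤ → ℤ), Function.Injective f →
      (∀ (j : ℤ) (x : V), x ∈ W j → L x ∈ W (f j)) →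
      ∀ (x : V) (j : ℤ),
        L ((DirectSum.decompose W x j : W j) : V)
          = ((DirectSum.decompose W (L x) (f j) : W (f j)) : V) := by
    intro L f hf hL x j
    conv_rhs => rw [← DirectSum.sum_support_decompose W x]
    rw [map_sum]
    have hsum : ((DirectSum.decompose W
        (∑ i ∈ (DirectSum.decompose W x).support, L ((DirectSum.decompose W x i : W i) : V))
        (f j) : W (f j)) : V)
        = ∑ i ∈ (DirectSum.decompose W x).support,
            ((DirectSum.decompose W (L ((DirectSum.decompose W x i : W i) : V)) (f j) :
              W (f j)) : V) := by
      induction (DirectSum.decompose W x).support using Finset.induction_on with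
      | empty => simp
      | insert _ _ hnot ih =>
          rw [Finset.sum_insert hnot, Finset.sum_insert hnot, DirectSum.decompose_add, ← ih]
          rw [DirectSum.add_apply, Submodule.coe_add]
    rw [hsum]
    rw [Finset.sum_eq_single j]
    · exact (DirectSum.decompose_of_mem_same W (hL j _ (DirectSum.decompose W x j).2)).symm
    · intro b _ hbj
      exact DirectSum.decompose_of_mem_ne W (hL b _ (DirectSum.decompose W x b).2)
        (fun h => hbj (hf h))
    · intro hj
      rw [DFinsupp.notMem_support_iff.mp hj]
      simp
  intro k hmap
  constructor
  · -- injective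
    intro a b hab
    have hab' : N (G (a : V)) = N (G (b : V)) := by
      have := congrArg Subtype.val hab
      simpa [LinearMap.restrict_apply] using this
    have ha : G (N (a : V)) = 0 := a.2.2
    have hb : G (N (b : V)) = 0 := b.2.2
    have : (a : V) - b = 0 := by
      apply hBzero
      · rw [map_sub, map_sub, ha, hb, sub_zero]
      · rw [map_sub, map_sub, hab', sub_self]
    exact Subtype.ext (sub_eq_zero.mp this)
  · -- surjective
    rintro ⟨y, hy1, hy2⟩
    have hy2' : G (N y) = 0 := hy2
    obtain ⟨z, hz⟩ := (hB.comp hB).surjective y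
    have hz' : G (N (G (N z) + N (G z))) + N (G (G (N z) + N (G z))) = y := by
      simpa [hBapp] using hz
    set u := N (G z) with hu
    have h1 : G (N u) = 0 := by rw [hu, hNN, map_zero]
    have h2 : N (G (G (N z))) = 0 := by rw [hGG, hNN]
    have hy' : G (N (G (N z))) + N (G u) = y := by
      rw [map_add, map_add, map_add, map_add, hNN, map_zero, add_zero, h2, zero_add] at hz'
      exact hz'
    set s := G (N (G (N z))) with hs
    have hsz : s = 0 := by
      apply hBzero
      · have : N s + N (N (G u)) = N y := by rw [← hy', map_add]
        rw [hNN, add_zero] at this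
        have : G (N s) = G (N y) := congrArg G this
        rw [this, hy2']
      · rw [hs, hGG, hNN]
    have hy'' : N (G u) = y := by rw [hsz, zero_add] at hy'; exact hy'
    -- take the degree-k component of u
    set x : V := ((DirectSum.decompose W u k : W k) : V) with hx
    have hGNmem : ∀ (j : ℤ) (v : V), v ∈ W j → (G ∘ₗ N) v ∈ W ((m : ℤ) - (j + 1)) := by
      intro j v hv
      exact hGdeg (j + 1) (Submodule.mem_map_of_mem (hNdeg j (Submodule.mem_map_of_mem hv)))
    have hNGmem : ∀ (j : ℤ) (v : V), v ∈ W j → (N ∘ₗ G) v ∈ W ((m : ℤ) - j + 1) := by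
      intro j v hv
      exact hNdeg ((m : ℤ) - j) (Submodule.mem_map_of_mem (hGdeg j (Submodule.mem_map_of_mem hv)))
    have hGNx : (G ∘ₗ N) x = 0 := by
      rw [hx, key (G ∘ₗ N) (fun j => (m : ℤ) - (j + 1)) (fun a b h => by dsimp only at h; omega) hGNmem u k]
      have : (G ∘ₗ N) u = 0 := h1
      rw [this]
      simp
    have hNGx : (N ∘ₗ G) x = y := by
      rw [hx, key (N ∘ₗ G) (fun j => (m : ℤ) - j + 1) (fun a b h => by dsimp only at h; omega) hNGmem u k]
      have : (N ∘ₗ G) u = y := hy''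
      rw [this]
      exact DirectSum.decompose_of_mem_same W hy1
    refine ⟨⟨x, ⟨(DirectSum.decompose W u k).2, ?_⟩⟩, ?_⟩
    · exact LinearMap.mem_ker.mpr hGNx
    · apply Subtype.ext
      simpa [LinearMap.restrict_apply] using hNGx
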